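/- Let d ≥ 1 and let s ≥ s₀ > d/2 be real numbers. There exists a constant C ≥ 1, depending only on d, s and s₀, such that for all integers m ≥ 3 and 1 ≤ n ≤ m−1, every real N ≥ 1, and all functions f, g : ℤ^d → [0,∞) with f(a) = 0 whenever ⟨a⟩ > N, g(a) = 0 whenever ⟨a⟩ ≤ N, ‖f‖_s < ∞ and ‖g‖_{s₀} < ∞, the function F = f^{⋆(m−1−n)} ⋆ g^{⋆n} satisfies (Σ_{ℓ∈ℤ^d, ⟨ℓ⟩≤N} ⟨ℓ⟩^{2s} F(ℓ)²)^{1/2} ≤ C^{m} N^{n(s−s₀)} ‖f‖_s^{m−1−n} ‖g‖_{s₀}^{n}. (Mixed-norm estimate on the low-frequency part of a polynomial vector field containing n high modes.) -/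

import Mathlib

/-- Japanese bracket `⟨a⟩ = (1+|a|²)^{1/2}` for `a ∈ ℤ^d`. -/
noncomputable def jap {d : ℕ} (a : Fin d → ℤ) : ℝ :=
  Real.sqrt (1 + ∑ i, ((a i : ℝ)) ^ 2)

/-- Convolution of two functions on `ℤ^d`. -/
noncomputable def conv {d : ℕ} (f g : (Fin d → ℤ) → ℝ) : (Fin d → ℤ) → ℝ :=
  fun a => ∑' b : Fin d → ℤ, f b * g (a - b)

/-- Iterated convolution `f^{⋆k}`, with `f^{⋆0}` the indicator of `{0}`. -/
noncomputable def convIter {d : ℕ} (f : (Fin d → ℤ) → ℝ) : ℕ → (Fin d → ℤ) → ℝ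
  | 0 => fun a => if a = 0 then 1 else 0
  | k + 1 => conv (convIter f k) f

/-- Weighted `ℓ²_s` norm of a real-valued sequence on `ℤ^d`. -/
noncomputable def wnormR {d : ℕ} (s : ℝ) (f : (Fin d → ℤ) → ℝ) : ℝ :=
  Real.sqrt (∑' a : Fin d → ℤ, jap a ^ (2 * s) * (f a) ^ 2)


open scoped ENNReal BigOperators
open MeasureTheory

open scoped ENNReal BigOperators
open MeasureTheory


lemma sumsq_nonneg {d : ℕ} (a : Fin d → ℤ) : (0:ℝ) ≤ ∑ i, ((a i : ℝ))^2 :=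
  Finset.sum_nonneg fun i _ => sq_nonneg _

lemma one_le_jap {d : ℕ} (a : Fin d → ℤ) : 1 ≤ jap a := by
  rw [jap, Real.one_le_sqrt]
  linarith [sumsq_nonneg a]

lemma jap_nonneg {d : ℕ} (a : Fin d → ℤ) : 0 ≤ jap a := le_trans zero_le_one (one_le_jap a)

lemma jap_sq {d : ℕ} (a : Fin d → ℤ) : jap a ^ 2 = 1 + ∑ i, ((a i : ℝ))^2 :=
  Real.sq_sqrt (by linarith [sumsq_nonneg a])

lemma jap_triangle {d : ℕ} (b c : Fin d → ℤ) : jap (b + c) ≤ jap b + jap c := by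
  have hb := sumsq_nonneg b; have hc := sumsq_nonneg c
  set p := Real.sqrt (∑ i, ((b i : ℝ))^2) with hp
  set q := Real.sqrt (∑ i, ((c i : ℝ))^2) with hq
  have hp0 : 0 ≤ p := Real.sqrt_nonneg _
  have hq0 : 0 ≤ q := Real.sqrt_nonneg _
  have hps : p^2 = ∑ i, ((b i : ℝ))^2 := Real.sq_sqrt hb
  have hqs : q^2 = ∑ i, ((c i : ℝ))^2 := Real.sq_sqrt hc
  have hcs : ∑ i, ((b i : ℝ)) * ((c i : ℝ)) ≤ p * q := by
    have h := Finset.sum_mul_sq_le_sq_mul_sq Finset.univ (fun i => ((b i : ℝ))) (fun i => ((c i : ℝ)))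
    have h2 : (∑ i, ((b i : ℝ)) * ((c i : ℝ)))^2 ≤ (p*q)^2 := by
      rw [mul_pow, hps, hqs]; exact h
    calc ∑ i, ((b i : ℝ)) * ((c i : ℝ)) ≤ |∑ i, ((b i : ℝ)) * ((c i : ℝ))| := le_abs_self _
    _ = Real.sqrt ((∑ i, ((b i : ℝ)) * ((c i : ℝ)))^2) := (Real.sqrt_sq_eq_abs _).symm
    _ ≤ Real.sqrt ((p*q)^2) := Real.sqrt_le_sqrt h2
    _ = p * q := Real.sqrt_sq (mul_nonneg hp0 hq0)
  have hkey : 1 + ∑ i, (((b+c) i : ℝ))^2 ≤ (jap b + jap c)^2 := by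
    have hexp : ∑ i, (((b+c) i : ℝ))^2 = (∑ i, ((b i : ℝ))^2) + 2*(∑ i, ((b i : ℝ))*((c i : ℝ))) + ∑ i, ((c i : ℝ))^2 := by
      rw [Finset.mul_sum, ← Finset.sum_add_distrib, ← Finset.sum_add_distrib]
      apply Finset.sum_congr rfl; intro i _
      push_cast [Pi.add_apply]; ring
    have hjb : jap b ^ 2 = 1 + p^2 := by rw [jap_sq, hps]
    have hjc : jap c ^ 2 = 1 + q^2 := by rw [jap_sq, hqs]
    have hpq : p * q ≤ jap b * jap c := by
      apply mul_le_mul _ _ hq0 (jap_nonneg b)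
      · rw [jap]; apply Real.sqrt_le_sqrt; linarith
      · rw [jap]; apply Real.sqrt_le_sqrt; linarith
    have h1 : (jap b + jap c)^2 = jap b ^2 + 2*(jap b * jap c) + jap c ^2 := by ring
    rw [hexp, h1, hjb, hjc]
    have h2pq : 2*(∑ i, ((b i : ℝ))*((c i : ℝ))) ≤ 2*(jap b * jap c) := by
      have := le_trans hcs hpq; linarith
    nlinarith [one_le_jap b, one_le_jap c]
  rw [jap]
  calc Real.sqrt (1 + ∑ i, (((b+c) i : ℝ))^2) ≤ Real.sqrt ((jap b + jap c)^2) := Real.sqrt_le_sqrt hkey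
  _ = jap b + jap c := Real.sqrt_sq (by have := jap_nonneg b; have := jap_nonneg c; linarith)

lemma oneD {τ : ℝ} (hτ : 1/2 < τ) :
    Summable (fun k : ℤ => ((1:ℝ) + (k:ℝ)^2) ^ (-τ)) := by
  have hsum : Summable (fun k : ℤ => |(k:ℝ)| ^ (-(2*τ)) + (if k = 0 then (1:ℝ) else 0)) := by
    apply Summable.add (Real.summable_abs_int_rpow (by linarith))
    exact summable_of_ne_finset_zero (s := {(0:ℤ)}) (by intro b hb; simp at hb ⊢; exact hb)
  apply Summable.of_nonneg_of_le (fun k => Real.rpow_nonneg (by positivity) _) _ hsum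
  intro k
  rcases eq_or_ne k 0 with hk | hk
  · subst hk; simp [Real.rpow_nonneg]
  · have hk1 : (1:ℝ) ≤ |(k:ℝ)| := by
      have : (1:ℤ) ≤ |k| := Int.one_le_abs (by exact_mod_cast hk)
      calc (1:ℝ) ≤ (|k| : ℤ) := by exact_mod_cast this
      _ = |(k:ℝ)| := by push_cast; ring
    have h1 : ((k:ℝ))^2 = |(k:ℝ)|^2 := (sq_abs _).symm
    have h2 : ((1:ℝ) + (k:ℝ)^2) ^ (-τ) ≤ ((k:ℝ)^2) ^ (-τ) := by
      apply Real.rpow_le_rpow_of_nonpos (by nlinarith) (by nlinarith) (by linarith)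
    have h3 : ((k:ℝ)^2 : ℝ) ^ (-τ) = |(k:ℝ)| ^ (-(2*τ)) := by
      rw [h1, ← Real.rpow_natCast |(k:ℝ)| 2, ← Real.rpow_mul (abs_nonneg _)]
      norm_num
    rw [h3] at h2
    have : (0:ℝ) ≤ if k = 0 then (1:ℝ) else 0 := by positivity
    linarith

lemma dimD : ∀ (d : ℕ) {τ : ℝ}, 1/2 < τ →
    Summable (fun a : Fin d → ℤ => ∏ i, ((1:ℝ) + ((a i:ℝ))^2) ^ (-τ)) := by
  intro d
  induction d with
  | zero => intro τ _; exact Summable.of_finite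
  | succ n ih =>
    intro τ hτ
    have h1 := oneD hτ
    have h2 := ih hτ
    have hprod := h1.mul_of_nonneg h2
      (fun k => Real.rpow_nonneg (by positivity) _)
      (fun a => Finset.prod_nonneg fun i _ => Real.rpow_nonneg (by positivity) _)
    have := (Fin.consEquiv (fun _ => ℤ)).symm.summable_iff.mpr hprod
    apply this.congr
    intro a
    simp only [Function.comp_apply, Fin.consEquiv_symm_apply]
    rw [Fin.prod_univ_succ]
    rfl

lemma summable_jap_rpow {d : ℕ} (hd : 1 ≤ d) {σ : ℝ} (hσ : (d:ℝ)/2 < σ) :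
    Summable (fun a : Fin d → ℤ => jap a ^ (-(2*σ))) := by
  have hd0 : (0:ℝ) < d := by exact_mod_cast hd
  have hτ : 1/2 < σ/d := by rw [lt_div_iff₀ hd0]; linarith
  apply Summable.of_nonneg_of_le
    (fun a => Real.rpow_nonneg (jap_nonneg a) _) _ (dimD d hτ)
  intro a
  set X : ℝ := 1 + ∑ i, ((a i : ℝ))^2 with hX
  have hX1 : 1 ≤ X := by have := sumsq_nonneg a; simp [hX]; linarith
  have hX0 : (0:ℝ) ≤ X := by linarith
  have hj : jap a ^ (-(2*σ)) = X ^ (-σ) := by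
    rw [jap, Real.sqrt_eq_rpow, ← Real.rpow_mul hX0]
    congr 1; ring
  rw [hj]
  have hprodle : ∏ i, ((1:ℝ) + ((a i:ℝ))^2) ≤ X ^ (d:ℕ) := by
    have : ∏ i : Fin d, ((1:ℝ) + ((a i:ℝ))^2) ≤ ∏ _i : Fin d, X := by
      apply Finset.prod_le_prod (fun i _ => by positivity)
      intro i _
      have hle : ((a i:ℝ))^2 ≤ ∑ j, ((a j : ℝ))^2 :=
        Finset.single_le_sum (f := fun j => ((a j:ℝ))^2) (fun j _ => sq_nonneg _) (Finset.mem_univ i)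
      simp [hX]; linarith
    simpa using this
  have hXd : X ^ (-σ) = (X ^ (d:ℕ)) ^ (-(σ/d)) := by
    rw [← Real.rpow_natCast X d, ← Real.rpow_mul hX0]
    congr 1
    field_simp
  rw [hXd]
  have hstep : (X ^ (d:ℕ)) ^ (-(σ/d)) ≤ (∏ i, ((1:ℝ) + ((a i:ℝ))^2)) ^ (-(σ/d)) := by
    apply Real.rpow_le_rpow_of_nonpos (Finset.prod_pos (fun i _ => by positivity)) hprodle
    apply neg_nonpos_of_nonneg
    positivity
  refine le_trans hstep (le_of_eq ?_)
  rw [← Real.finset_prod_rpow _ _ (fun i _ => by positivity)]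

lemma jap_pos {d : ℕ} (a : Fin d → ℤ) : 0 < jap a := lt_of_lt_of_le one_pos (one_le_jap a)

section core
variable {d : ℕ}

lemma ecs {α : Type*} [Countable α] (x y : α → ℝ≥0∞) :
    (∑' a, x a * y a) ≤ (∑' a, (x a) ^ 2) ^ ((1:ℝ)/2) * (∑' a, (y a) ^ 2) ^ ((1:ℝ)/2) := by
  classical
  letI : MeasurableSpace α := ⊤
  haveI : MeasurableSingletonClass α := ⟨fun _ => trivial⟩
  have h := ENNReal.lintegral_mul_le_Lp_mul_Lq (Measure.count : Measure α)
    (Real.holderConjugate_iff.mpr ⟨by norm_num, by norm_num⟩ : Real.HolderConjugate 2 2)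
    (measurable_of_countable x).aemeasurable (measurable_of_countable y).aemeasurable
  have e2 : ∀ z : α → ℝ≥0∞, (fun a => z a ^ (2:ℝ)) = fun a => z a ^ 2 := by
    intro z; funext a; rw [← ENNReal.rpow_natCast (z a) 2]; norm_num
  rw [lintegral_count, lintegral_count, lintegral_count, e2 x, e2 y] at h
  exact h

lemma esq_half (z : ℝ≥0∞) : (z ^ ((1:ℝ)/2)) ^ 2 = z := by
  rw [← ENNReal.rpow_natCast _ 2, ← ENNReal.rpow_mul]; norm_num

noncomputable def econv (u v : (Fin d → ℤ) → ℝ≥0∞) (a : Fin d → ℤ) : ℝ≥0∞ :=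
  ∑' b, u b * v (a - b)

noncomputable def eIter (u : (Fin d → ℤ) → ℝ≥0∞) : ℕ → (Fin d → ℤ) → ℝ≥0∞
  | 0 => fun a => if a = 0 then 1 else 0
  | k + 1 => econv (eIter u k) u

lemma econv_comm (u v : (Fin d → ℤ) → ℝ≥0∞) : econv u v = econv v u := by
  funext a
  rw [econv, econv, ← Equiv.tsum_eq (Equiv.subLeft a) (fun b => v b * u (a - b))]
  apply tsum_congr; intro b
  simp [Equiv.subLeft, mul_comm]

lemma tsum_translate (v : (Fin d → ℤ) → ℝ≥0∞) (b : Fin d → ℤ) :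
    ∑' a, v (a - b) = ∑' a, v a := by
  rw [← Equiv.tsum_eq (Equiv.subRight b) v]; rfl

lemma tsum_translate' (v : (Fin d → ℤ) → ℝ≥0∞) (a : Fin d → ℤ) :
    ∑' b, v (a - b) = ∑' b, v b := by
  rw [← Equiv.tsum_eq (Equiv.subLeft a) v]; rfl

lemma econv_delta (u : (Fin d → ℤ) → ℝ≥0∞) :
    econv (fun a => if a = 0 then 1 else 0) u = u := by
  funext a
  rw [econv, tsum_eq_single 0 (by intro b hb; simp [hb])]
  simp

/-- Young: `‖u⋆v‖₂² ≤ ‖u‖₂² ‖v‖₁²`. -/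
lemma young (u v : (Fin d → ℤ) → ℝ≥0∞) :
    ∑' a, (econv u v a) ^ 2 ≤ (∑' b, (u b)^2) * (∑' b, v b) ^ 2 := by
  have hpt : ∀ a, (econv u v a) ^ 2 ≤ (∑' b, (u b)^2 * v (a - b)) * (∑' b, v b) := by
    intro a
    have h1 : econv u v a ≤ (∑' b, (u b)^2 * v (a - b)) ^ ((1:ℝ)/2) *
        (∑' b, v (a - b)) ^ ((1:ℝ)/2) := by
      have := ecs (fun b => u b * (v (a - b)) ^ ((1:ℝ)/2)) (fun b => (v (a - b)) ^ ((1:ℝ)/2))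
      calc econv u v a = ∑' b, (u b * (v (a-b)) ^ ((1:ℝ)/2)) * (v (a-b)) ^ ((1:ℝ)/2) := by
            rw [econv]; apply tsum_congr; intro b
            rw [mul_assoc, ← sq, esq_half]
      _ ≤ _ := by
            refine le_trans this (le_of_eq ?_)
            congr 1
            · congr 1; apply tsum_congr; intro b
              rw [mul_pow, esq_half]
            · congr 1; apply tsum_congr; intro b
              rw [esq_half]
      _ = _ := rfl
    calc (econv u v a)^2 ≤ ((∑' b, (u b)^2 * v (a - b)) ^ ((1:ℝ)/2) *
          (∑' b, v (a - b)) ^ ((1:ℝ)/2)) ^ 2 := by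
            rw [sq, sq]; exact mul_le_mul' h1 h1
    _ = (∑' b, (u b)^2 * v (a - b)) * (∑' b, v (a - b)) := by
          rw [mul_pow, esq_half, esq_half]
    _ = (∑' b, (u b)^2 * v (a - b)) * (∑' b, v b) := by rw [tsum_translate' v a]
  calc ∑' a, (econv u v a)^2 ≤ ∑' a, (∑' b, (u b)^2 * v (a - b)) * (∑' b, v b) :=
        ENNReal.tsum_le_tsum hpt
  _ = (∑' a, ∑' b, (u b)^2 * v (a - b)) * (∑' b, v b) := ENNReal.tsum_mul_right
  _ = (∑' b, ∑' a, (u b)^2 * v (a - b)) * (∑' b, v b) := by rw [ENNReal.tsum_comm]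
  _ = (∑' b, (u b)^2 * ∑' a, v (a - b)) * (∑' b, v b) := by
        congr 1; apply tsum_congr; intro b; rw [ENNReal.tsum_mul_left]
  _ = (∑' b, (u b)^2 * ∑' a, v a) * (∑' b, v b) := by
        congr 1; apply tsum_congr; intro b; rw [tsum_translate v b]
  _ = (∑' b, (u b)^2) * (∑' b, v b) ^ 2 := by rw [ENNReal.tsum_mul_right]; ring
end core
section weights
variable {d : ℕ}

noncomputable def eW1 (σ : ℝ) (a : Fin d → ℤ) : ℝ≥0∞ := ENNReal.ofReal (jap a ^ σ)
noncomputable def Q (σ : ℝ) (u : (Fin d → ℤ) → ℝ≥0∞) : ℝ≥0∞ := ∑' a, (eW1 σ a)^2 * (u a)^2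
noncomputable def eK2 (d : ℕ) (σ : ℝ) : ℝ≥0∞ := ∑' a : Fin d → ℤ, ENNReal.ofReal (jap a ^ (-(2*σ)))

lemma eW1_sq (σ : ℝ) (a : Fin d → ℤ) : (eW1 σ a)^2 = ENNReal.ofReal (jap a ^ (2*σ)) := by
  rw [eW1, ← ENNReal.ofReal_pow (Real.rpow_nonneg (jap_nonneg a) _),
    ← Real.rpow_natCast (jap a ^ σ) 2, ← Real.rpow_mul (jap_nonneg a)]
  norm_num; rw [mul_comm]

lemma jap_rpow_triangle {σ : ℝ} (hσ : 0 ≤ σ) (a b : Fin d → ℤ) :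
    jap a ^ σ ≤ 2^σ * (jap b ^ σ + jap (a - b) ^ σ) := by
  have hab : b + (a - b) = a := by abel
  have h1 : jap a ≤ jap b + jap (a - b) := by
    have := jap_triangle b (a - b); rwa [hab] at this
  have h2 : jap a ≤ 2 * max (jap b) (jap (a-b)) := by
    rcases le_total (jap b) (jap (a-b)) with h | h
    · rw [max_eq_right h]; linarith
    · rw [max_eq_left h]; linarith
  calc jap a ^ σ ≤ (2 * max (jap b) (jap (a-b))) ^ σ :=
        Real.rpow_le_rpow (jap_nonneg a) h2 hσ
  _ = 2^σ * (max (jap b) (jap (a-b))) ^ σ :=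
        Real.mul_rpow (by norm_num) (le_trans (jap_nonneg b) (le_max_left _ _))
  _ ≤ 2^σ * (jap b ^ σ + jap (a-b) ^ σ) := by
        apply mul_le_mul_of_nonneg_left _ (Real.rpow_nonneg (by norm_num) _)
        rcases max_cases (jap b) (jap (a-b)) with ⟨h, _⟩ | ⟨h, _⟩ <;> rw [h]
        · nlinarith [Real.rpow_nonneg (jap_nonneg (a-b)) σ]
        · nlinarith [Real.rpow_nonneg (jap_nonneg b) σ]

lemma eW1_triangle {σ : ℝ} (hσ : 0 ≤ σ) (a b : Fin d → ℤ) :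
    eW1 σ a ≤ ENNReal.ofReal (2^σ) * (eW1 σ b + eW1 σ (a - b)) := by
  rw [eW1, eW1, eW1, ← ENNReal.ofReal_add (Real.rpow_nonneg (jap_nonneg _) _)
    (Real.rpow_nonneg (jap_nonneg _) _), ← ENNReal.ofReal_mul (Real.rpow_nonneg (by norm_num) _)]
  exact ENNReal.ofReal_le_ofReal (jap_rpow_triangle hσ a b)

lemma l1_sq_le (σ : ℝ) (u : (Fin d → ℤ) → ℝ≥0∞) :
    (∑' a, u a)^2 ≤ eK2 d σ * Q σ u := by
  have hpt : ∀ a, u a = ENNReal.ofReal (jap a ^ (-σ)) * (eW1 σ a * u a) := by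
    intro a
    rw [← mul_assoc, eW1, ← ENNReal.ofReal_mul (Real.rpow_nonneg (jap_nonneg a) _),
      ← Real.rpow_add (jap_pos a)]
    norm_num
  have h1 : (∑' a, u a) ≤ (eK2 d σ) ^ ((1:ℝ)/2) * (Q σ u) ^ ((1:ℝ)/2) := by
    calc (∑' a, u a) = ∑' a, ENNReal.ofReal (jap a ^ (-σ)) * (eW1 σ a * u a) :=
          tsum_congr (fun a => hpt a)
    _ ≤ (∑' a, (ENNReal.ofReal (jap a ^ (-σ)))^2) ^ ((1:ℝ)/2) *
        (∑' a, (eW1 σ a * u a)^2) ^ ((1:ℝ)/2) := ecs _ _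
    _ = (eK2 d σ) ^ ((1:ℝ)/2) * (Q σ u) ^ ((1:ℝ)/2) := by
        congr 1
        · congr 1; rw [eK2]; apply tsum_congr; intro a
          rw [← ENNReal.ofReal_pow (Real.rpow_nonneg (jap_nonneg a) _),
            ← Real.rpow_natCast (jap a ^ (-σ)) 2, ← Real.rpow_mul (jap_nonneg a)]
          norm_num; rw [mul_comm]
        · congr 1; rw [Q]; apply tsum_congr; intro a; rw [mul_pow]
  calc (∑' a, u a)^2 ≤ ((eK2 d σ) ^ ((1:ℝ)/2) * (Q σ u) ^ ((1:ℝ)/2))^2 := by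
        rw [sq, sq]; exact mul_le_mul' h1 h1
  _ = eK2 d σ * Q σ u := by rw [mul_pow, esq_half, esq_half]

lemma sq_add_le (A B : ℝ≥0∞) : (A + B)^2 ≤ 4 * (A^2 + B^2) := by
  have h : A + B ≤ 2 * max A B := by
    rcases le_total A B with h | h
    · rw [max_eq_right h, two_mul]; exact add_le_add h le_rfl
    · rw [max_eq_left h, two_mul]; exact add_le_add le_rfl h
  calc (A+B)^2 ≤ (2 * max A B)^2 := by rw [sq, sq]; exact mul_le_mul' h h
  _ = 4 * (max A B)^2 := by rw [mul_pow]; norm_num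
  _ ≤ 4 * (A^2 + B^2) := by
      apply mul_le_mul' le_rfl
      rcases max_cases A B with ⟨h, _⟩ | ⟨h, _⟩ <;> rw [h]
      · exact le_add_right le_rfl
      · exact le_add_left le_rfl

lemma algebra_bound {σ : ℝ} (hσ : 0 ≤ σ) (u v : (Fin d → ℤ) → ℝ≥0∞) :
    Q σ (econv u v) ≤ (8 * (ENNReal.ofReal (2^σ))^2 * eK2 d σ) * Q σ u * Q σ v := by
  set c := ENNReal.ofReal ((2:ℝ)^σ) with hc
  set A := econv (fun x => eW1 σ x * u x) v with hA
  set B := econv u (fun x => eW1 σ x * v x) with hB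
  have hpt : ∀ a, eW1 σ a * econv u v a ≤ c * (A a + B a) := by
    intro a
    calc eW1 σ a * econv u v a = ∑' b, eW1 σ a * (u b * v (a - b)) := by
          rw [econv, ENNReal.tsum_mul_left]
    _ ≤ ∑' b, (c * (eW1 σ b + eW1 σ (a - b))) * (u b * v (a - b)) := by
          apply ENNReal.tsum_le_tsum; intro b
          exact mul_le_mul' (eW1_triangle hσ a b) le_rfl
    _ = ∑' b, c * ((eW1 σ b * u b) * v (a - b) + u b * (eW1 σ (a-b) * v (a - b))) := by
          apply tsum_congr; intro b; ring
    _ = c * (A a + B a) := by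
          rw [ENNReal.tsum_mul_left, hA, hB, econv, econv, ← ENNReal.tsum_add]
  have hsq : ∀ a, (eW1 σ a)^2 * (econv u v a)^2 ≤ 4 * c^2 * ((A a)^2 + (B a)^2) := by
    intro a
    calc (eW1 σ a)^2 * (econv u v a)^2 = (eW1 σ a * econv u v a)^2 := by rw [mul_pow]
    _ ≤ (c * (A a + B a))^2 := by rw [sq, sq]; exact mul_le_mul' (hpt a) (hpt a)
    _ = c^2 * (A a + B a)^2 := by rw [mul_pow]
    _ ≤ c^2 * (4 * ((A a)^2 + (B a)^2)) := mul_le_mul' le_rfl (sq_add_le _ _)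
    _ = 4 * c^2 * ((A a)^2 + (B a)^2) := by ring
  calc Q σ (econv u v) ≤ ∑' a, 4 * c^2 * ((A a)^2 + (B a)^2) :=
        ENNReal.tsum_le_tsum hsq
  _ = 4 * c^2 * ((∑' a, (A a)^2) + ∑' a, (B a)^2) := by
        rw [ENNReal.tsum_mul_left, ENNReal.tsum_add]
  _ ≤ 4 * c^2 * ((Q σ u * (eK2 d σ * Q σ v)) + (Q σ v * (eK2 d σ * Q σ u))) := by
        apply mul_le_mul' le_rfl
        apply add_le_add
        · calc ∑' a, (A a)^2 ≤ (∑' b, (eW1 σ b * u b)^2) * (∑' b, v b)^2 := young _ _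
          _ = Q σ u * (∑' b, v b)^2 := by
              congr 1; rw [Q]; apply tsum_congr; intro b; rw [mul_pow]
          _ ≤ Q σ u * (eK2 d σ * Q σ v) := mul_le_mul' le_rfl (l1_sq_le σ v)
        · calc ∑' a, (B a)^2 = ∑' a, (econv (fun x => eW1 σ x * v x) u a)^2 := by
                rw [hB, econv_comm]
          _ ≤ (∑' b, (eW1 σ b * v b)^2) * (∑' b, u b)^2 := young _ _
          _ = Q σ v * (∑' b, u b)^2 := by
              congr 1; rw [Q]; apply tsum_congr; intro b; rw [mul_pow]
          _ ≤ Q σ v * (eK2 d σ * Q σ u) := mul_le_mul' le_rfl (l1_sq_le σ u)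
  _ = (8 * c^2 * eK2 d σ) * Q σ u * Q σ v := by ring

lemma iter_bound {σ : ℝ} (hσ : 0 ≤ σ) (u : (Fin d → ℤ) → ℝ≥0∞) :
    ∀ k : ℕ, 1 ≤ k →
      Q σ (eIter u k) ≤ ((8 * (ENNReal.ofReal (2^σ))^2 * eK2 d σ))^(k-1) * (Q σ u)^k := by
  intro k
  induction k with
  | zero => intro h; omega
  | succ n ih =>
    intro _
    rcases Nat.eq_or_lt_of_le (Nat.one_le_iff_ne_zero.mpr (Nat.succ_ne_zero n)) with h1 | h1
    · have hn : n = 0 := by omega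
      subst hn
      show Q σ (econv (eIter u 0) u) ≤ _
      rw [show eIter u 0 = (fun a : Fin d → ℤ => if a = 0 then (1:ℝ≥0∞) else 0) from rfl,
        econv_delta]
      simp
    · have hn : 1 ≤ n := by omega
      have := ih hn
      calc Q σ (eIter u (n+1)) = Q σ (econv (eIter u n) u) := rfl
      _ ≤ (8 * (ENNReal.ofReal (2^σ))^2 * eK2 d σ) * Q σ (eIter u n) * Q σ u :=
          algebra_bound hσ _ _
      _ ≤ (8 * (ENNReal.ofReal (2^σ))^2 * eK2 d σ) *
            ((8 * (ENNReal.ofReal (2^σ))^2 * eK2 d σ)^(n-1) * (Q σ u)^n) * Q σ u :=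
          mul_le_mul' (mul_le_mul' le_rfl this) le_rfl
      _ = (8 * (ENNReal.ofReal (2^σ))^2 * eK2 d σ)^(n+1-1) * (Q σ u)^(n+1) := by
          rw [show n+1-1 = (n-1)+1 by omega, pow_succ, pow_succ]; ring
end weights
section transfer
variable {d : ℕ}

lemma ofReal_conv_general {u v : (Fin d → ℤ) → ℝ} (hu : ∀ a, 0 ≤ u a) (hv : ∀ a, 0 ≤ v a)
    {U V : (Fin d → ℤ) → ℝ≥0∞} (hU : ∀ a, ENNReal.ofReal (u a) = U a)
    (hV : ∀ a, ENNReal.ofReal (v a) = V a) {a : Fin d → ℤ} (hfin : econv U V a ≠ ∞) :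
    ENNReal.ofReal (conv u v a) = econv U V a := by
  have he : econv U V a = ∑' b, ENNReal.ofReal (u b * v (a - b)) := by
    rw [econv]; apply tsum_congr; intro b
    rw [ENNReal.ofReal_mul (hu b), hU, hV]
  have hsumm : Summable (fun b => u b * v (a - b)) := by
    rw [he] at hfin
    have h := ENNReal.summable_toReal hfin
    apply h.congr
    intro b
    exact ENNReal.toReal_ofReal (mul_nonneg (hu b) (hv _))
  rw [conv, ENNReal.ofReal_tsum_of_nonneg (fun b => mul_nonneg (hu b) (hv _)) hsumm, he]

lemma convIter_nonneg {f : (Fin d → ℤ) → ℝ} (hf : ∀ a, 0 ≤ f a) :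
    ∀ k a, 0 ≤ convIter f k a := by
  intro k
  induction k with
  | zero =>
    intro a
    show (0:ℝ) ≤ if a = 0 then 1 else 0
    split <;> norm_num
  | succ n ih =>
    intro a
    exact tsum_nonneg (fun b => mul_nonneg (ih b) (hf _))

lemma ofReal_convIter {f : (Fin d → ℤ) → ℝ} (hf : ∀ a, 0 ≤ f a)
    {P : (Fin d → ℤ) → ℝ≥0∞} (hP : ∀ a, ENNReal.ofReal (f a) = P a)
    (hfin : ∀ k a, eIter P k a ≠ ∞) :
    ∀ k a, ENNReal.ofReal (convIter f k a) = eIter P k a := by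
  intro k
  induction k with
  | zero =>
    intro a
    show ENNReal.ofReal (if a = 0 then 1 else 0) = if a = 0 then 1 else 0
    split <;> simp
  | succ n ih =>
    intro a
    exact ofReal_conv_general (convIter_nonneg hf n) hf ih hP (hfin (n+1) a)

lemma finite_of_Q {σ : ℝ} (hσ : 0 ≤ σ) {u : (Fin d → ℤ) → ℝ≥0∞} (hQ : Q σ u ≠ ∞) :
    ∀ a, u a ≠ ∞ := by
  intro a hua
  apply hQ
  have h1 : (1:ℝ≥0∞) ≤ eW1 σ a := by
    rw [eW1, show (1:ℝ≥0∞) = ENNReal.ofReal 1 by simp]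
    exact ENNReal.ofReal_le_ofReal (Real.one_le_rpow (one_le_jap a) hσ)
  have : (eW1 σ a)^2 * (u a)^2 = ∞ := by
    rw [hua]
    rw [ENNReal.mul_eq_top]
    left
    constructor
    · intro h; rw [pow_eq_zero_iff (by norm_num)] at h; rw [h] at h1; simp at h1
    · simp
  rw [eq_top_iff, ← this]
  exact ENNReal.le_tsum a
end transfer
section qlemmas
variable {d : ℕ}

lemma Q_ofReal {σ : ℝ} {h : (Fin d → ℤ) → ℝ} (hh : ∀ a, 0 ≤ h a)
    (hsum : Summable (fun a => jap a ^ (2*σ) * (h a)^2)) :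
    Q σ (fun a => ENNReal.ofReal (h a)) = ENNReal.ofReal (∑' a, jap a ^ (2*σ) * (h a)^2) := by
  rw [ENNReal.ofReal_tsum_of_nonneg
    (fun a => mul_nonneg (Real.rpow_nonneg (jap_nonneg a) _) (sq_nonneg _)) hsum, Q]
  apply tsum_congr; intro a
  rw [eW1_sq, ENNReal.ofReal_mul (Real.rpow_nonneg (jap_nonneg a) _),
    ENNReal.ofReal_pow (hh a)]

lemma Q_mono_weight {σ σ' : ℝ} (hσ : σ ≤ σ') (u : (Fin d → ℤ) → ℝ≥0∞) :
    Q σ u ≤ Q σ' u := by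
  apply ENNReal.tsum_le_tsum; intro a
  apply mul_le_mul' _ le_rfl
  apply pow_le_pow_left' _ 2
  exact ENNReal.ofReal_le_ofReal (Real.rpow_le_rpow_of_exponent_le (one_le_jap a) hσ)

lemma conv_nonneg' {u v : (Fin d → ℤ) → ℝ} (hu : ∀ a, 0 ≤ u a) (hv : ∀ a, 0 ≤ v a) (a : Fin d → ℤ) :
    0 ≤ conv u v a :=
  tsum_nonneg (fun b => mul_nonneg (hu b) (hv _))
end qlemmas


set_option maxHeartbeats 1000000 in
theorem mixed_norm_low_output_estimate
    (d : ℕ) (hd : 1 ≤ d) (s s₀ : ℝ) (hs₀ : (d : ℝ) / 2 < s₀) (hss₀ : s₀ ≤ s) :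
    ∃ C : ℝ, 1 ≤ C ∧
      ∀ m n : ℕ, 3 ≤ m → 1 ≤ n → n ≤ m - 1 →
        ∀ N : ℝ, 1 ≤ N →
          ∀ f g : (Fin d → ℤ) → ℝ,
            (∀ a, 0 ≤ f a) → (∀ a, N < jap a → f a = 0) →
            (∀ a, 0 ≤ g a) → (∀ a, jap a ≤ N → g a = 0) →
            Summable (fun a => jap a ^ (2 * s) * (f a) ^ 2) →
            Summable (fun a => jap a ^ (2 * s₀) * (g a) ^ 2) →
            Real.sqrt (∑' ℓ : Fin d → ℤ,
                if jap ℓ ≤ N then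
                  jap ℓ ^ (2 * s) * (conv (convIter f (m - 1 - n)) (convIter g n) ℓ) ^ 2
                else 0)
              ≤ C ^ m * N ^ ((n : ℝ) * (s - s₀)) * wnormR s f ^ (m - 1 - n)
                  * wnormR s₀ g ^ n := by
  have hs₀pos : 0 < s₀ := lt_of_le_of_lt (by positivity) hs₀
  have hKsum : Summable (fun a : Fin d → ℤ => jap a ^ (-(2*s₀))) := summable_jap_rpow hd hs₀
  set Ksum := ∑' a : Fin d → ℤ, jap a ^ (-(2*s₀)) with hKdef
  have hKnonneg : 0 ≤ Ksum := tsum_nonneg (fun a => Real.rpow_nonneg (jap_nonneg a) _)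
  set E : ℝ := 8 * ((2:ℝ)^s₀)^2 * Ksum with hEdef
  have hEnonneg : 0 ≤ E := by
    apply mul_nonneg (by positivity) hKnonneg
  set C : ℝ := Real.sqrt E + 1 with hCdef
  have hC1 : 1 ≤ C := by
    have := Real.sqrt_nonneg E; rw [hCdef]; linarith
  have hC0 : 0 ≤ C := by linarith
  have hEC : E ≤ C^2 := by
    have h := Real.sq_sqrt hEnonneg
    have := Real.sqrt_nonneg E
    nlinarith
  refine ⟨C, hC1, ?_⟩
  intro m n hm hn hnm N hN f g hf0 _ hg0 _ hfsum hgsum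
  set k := m - 1 - n with hkdef
  have hkn : k + n = m - 1 := by omega
  have hknm : k + n - 1 ≤ m := by omega
  set P : (Fin d → ℤ) → ℝ≥0∞ := fun a => ENNReal.ofReal (f a) with hPdef
  set Gg : (Fin d → ℤ) → ℝ≥0∞ := fun a => ENNReal.ofReal (g a) with hGdef
  set D : ℝ≥0∞ := 8 * (ENNReal.ofReal ((2:ℝ)^s₀))^2 * eK2 d s₀ with hDdef
  have heK2 : eK2 d s₀ = ENNReal.ofReal Ksum := by
    rw [eK2, hKdef,
      ENNReal.ofReal_tsum_of_nonneg (fun a => Real.rpow_nonneg (jap_nonneg a) _) hKsum]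
  have hDeq : D = ENNReal.ofReal E := by
    rw [hDdef, heK2, hEdef, ENNReal.ofReal_mul (by positivity),
      ENNReal.ofReal_mul (by norm_num : (0:ℝ) ≤ 8),
      ENNReal.ofReal_pow (by positivity : (0:ℝ) ≤ (2:ℝ)^s₀)]
    norm_num
  have hD_le : D ≤ ENNReal.ofReal (C^2) := by
    rw [hDeq]; exact ENNReal.ofReal_le_ofReal hEC
  have hDne : D ≠ ∞ := by rw [hDeq]; exact ENNReal.ofReal_ne_top
  -- Q bounds for P and Gg
  set wf := wnormR s f with hwf
  set wg := wnormR s₀ g with hwg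
  have hwf0 : 0 ≤ wf := Real.sqrt_nonneg _
  have hwg0 : 0 ≤ wg := Real.sqrt_nonneg _
  have hwfsq : wf^2 = ∑' a, jap a ^ (2*s) * (f a)^2 := by
    rw [hwf, wnormR]
    exact Real.sq_sqrt (tsum_nonneg (fun a =>
      mul_nonneg (Real.rpow_nonneg (jap_nonneg a) _) (sq_nonneg _)))
  have hwgsq : wg^2 = ∑' a, jap a ^ (2*s₀) * (g a)^2 := by
    rw [hwg, wnormR]
    exact Real.sq_sqrt (tsum_nonneg (fun a =>
      mul_nonneg (Real.rpow_nonneg (jap_nonneg a) _) (sq_nonneg _)))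
  have hQsP : Q s P = ENNReal.ofReal (wf^2) := by
    rw [hPdef, Q_ofReal hf0 hfsum, hwfsq]
  have hQP : Q s₀ P ≤ ENNReal.ofReal (wf^2) := le_trans (Q_mono_weight hss₀ P) (le_of_eq hQsP)
  have hQG : Q s₀ Gg = ENNReal.ofReal (wg^2) := by
    rw [hGdef, Q_ofReal hg0 hgsum, hwgsq]
  have hQPne : Q s₀ P ≠ ∞ := ne_top_of_le_ne_top ENNReal.ofReal_ne_top hQP
  have hQGne : Q s₀ Gg ≠ ∞ := by rw [hQG]; exact ENNReal.ofReal_ne_top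
  -- finiteness of iterates
  have hiterfin : ∀ (u : (Fin d → ℤ) → ℝ≥0∞), Q s₀ u ≠ ∞ → ∀ j a, eIter u j a ≠ ∞ := by
    intro u hu j
    cases j with
    | zero =>
      intro a
      show (if a = 0 then (1:ℝ≥0∞) else 0) ≠ ∞
      split <;> simp
    | succ j' =>
      apply finite_of_Q hs₀pos.le
      apply ne_top_of_le_ne_top _ (iter_bound hs₀pos.le u (j'+1) (by omega))
      exact ENNReal.mul_ne_top (ENNReal.pow_ne_top hDne) (ENNReal.pow_ne_top hu)
  have hPfin := hiterfin P hQPne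
  have hGfin := hiterfin Gg hQGne
  set eF : (Fin d → ℤ) → ℝ≥0∞ := econv (eIter P k) (eIter Gg n) with hFdef
  have hQeF : Q s₀ eF ≤ D^(k+n-1) * (Q s₀ P)^k * (Q s₀ Gg)^n := by
    rcases Nat.eq_zero_or_pos k with hk0 | hk1
    · rw [hFdef, hk0]
      rw [show eIter P 0 = (fun a : Fin d → ℤ => if a = 0 then (1:ℝ≥0∞) else 0) from rfl,
        econv_delta]
      rw [pow_zero, Nat.zero_add, mul_one]
      exact iter_bound hs₀pos.le Gg n hn
    · calc Q s₀ eF ≤ D * Q s₀ (eIter P k) * Q s₀ (eIter Gg n) := algebra_bound hs₀pos.le _ _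
      _ ≤ D * (D^(k-1) * (Q s₀ P)^k) * (D^(n-1) * (Q s₀ Gg)^n) :=
          mul_le_mul' (mul_le_mul' le_rfl (iter_bound hs₀pos.le P k hk1))
            (iter_bound hs₀pos.le Gg n hn)
      _ = D^(k+n-1) * (Q s₀ P)^k * (Q s₀ Gg)^n := by
          have hpe : k+n-1 = 1+(k-1)+(n-1) := by omega
          rw [hpe, pow_add, pow_add, pow_one]; ring
  have hQeFne : Q s₀ eF ≠ ∞ := by
    apply ne_top_of_le_ne_top _ hQeF
    exact ENNReal.mul_ne_top (ENNReal.mul_ne_top (ENNReal.pow_ne_top hDne)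
      (ENNReal.pow_ne_top hQPne)) (ENNReal.pow_ne_top hQGne)
  have hFfin : ∀ ℓ, eF ℓ ≠ ∞ := finite_of_Q hs₀pos.le hQeFne
  -- transfer for F
  set Freal := conv (convIter f k) (convIter g n) with hFrdef
  have hFr0 : ∀ ℓ, 0 ≤ Freal ℓ :=
    fun ℓ => conv_nonneg' (convIter_nonneg hf0 k) (convIter_nonneg hg0 n) ℓ
  have hFval : ∀ ℓ, ENNReal.ofReal (Freal ℓ) = eF ℓ := by
    intro ℓ
    exact ofReal_conv_general (convIter_nonneg hf0 k) (convIter_nonneg hg0 n)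
      (ofReal_convIter hf0 (fun a => rfl) hPfin k)
      (ofReal_convIter hg0 (fun a => rfl) hGfin n) (hFfin ℓ)
  have hFtoReal : ∀ ℓ, (eF ℓ).toReal = Freal ℓ := by
    intro ℓ; rw [← hFval ℓ, ENNReal.toReal_ofReal (hFr0 ℓ)]
  -- the ENNReal sum
  set eT : (Fin d → ℤ) → ℝ≥0∞ := fun ℓ =>
    if jap ℓ ≤ N then ENNReal.ofReal (jap ℓ ^ (2*s)) * (eF ℓ)^2 else 0 with hTdef
  have hTfin : ∀ ℓ, eT ℓ ≠ ∞ := by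
    intro ℓ
    simp only [hTdef]
    split
    · exact ENNReal.mul_ne_top ENNReal.ofReal_ne_top (ENNReal.pow_ne_top (hFfin ℓ))
    · simp
  have hrealsum : (∑' ℓ, if jap ℓ ≤ N then jap ℓ ^ (2*s) * (Freal ℓ)^2 else 0)
      = (∑' ℓ, eT ℓ).toReal := by
    rw [ENNReal.tsum_toReal_eq hTfin]
    apply tsum_congr; intro ℓ
    simp only [hTdef]
    by_cases hℓ : jap ℓ ≤ N
    · simp only [if_pos hℓ]
      rw [ENNReal.toReal_mul, ENNReal.toReal_pow,
        ENNReal.toReal_ofReal (Real.rpow_nonneg (jap_nonneg ℓ) _), hFtoReal]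
    · simp only [if_neg hℓ]; simp
  have hsum_le : (∑' ℓ, eT ℓ) ≤ ENNReal.ofReal (N ^ (2*(s-s₀))) * Q s₀ eF := by
    rw [Q, ← ENNReal.tsum_mul_left]
    apply ENNReal.tsum_le_tsum
    intro ℓ
    simp only [hTdef]
    split
    · rename_i hℓ
      rw [← mul_assoc]
      apply mul_le_mul' _ le_rfl
      rw [eW1_sq, ← ENNReal.ofReal_mul (by positivity)]
      apply ENNReal.ofReal_le_ofReal
      have hj1 : 0 < jap ℓ := jap_pos ℓ
      have hsplit : jap ℓ ^ (2*s) = jap ℓ ^ (2*(s-s₀)) * jap ℓ ^ (2*s₀) := by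
        rw [← Real.rpow_add hj1]; congr 1; ring
      rw [hsplit]
      apply mul_le_mul_of_nonneg_right _ (Real.rpow_nonneg (jap_nonneg ℓ) _)
      exact Real.rpow_le_rpow (jap_nonneg ℓ) hℓ (by nlinarith)
    · exact zero_le
  -- put everything together in ENNReal
  set R : ℝ := C ^ m * N ^ ((n:ℝ) * (s-s₀)) * wf ^ k * wg ^ n with hRdef
  have hNpow0 : 0 ≤ N ^ ((n:ℝ)*(s-s₀)) := Real.rpow_nonneg (by linarith) _
  have hR0 : 0 ≤ R := by
    rw [hRdef]
    apply mul_nonneg (mul_nonneg (mul_nonneg (pow_nonneg hC0 m) hNpow0) (pow_nonneg hwf0 k))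
      (pow_nonneg hwg0 n)
  have hmain : (∑' ℓ, eT ℓ) ≤ ENNReal.ofReal (R^2) := by
    calc (∑' ℓ, eT ℓ) ≤ ENNReal.ofReal (N ^ (2*(s-s₀))) * Q s₀ eF := hsum_le
    _ ≤ ENNReal.ofReal (N ^ (2*(s-s₀))) *
          (D^(k+n-1) * (Q s₀ P)^k * (Q s₀ Gg)^n) := mul_le_mul' le_rfl hQeF
    _ ≤ ENNReal.ofReal (N ^ (2*(s-s₀))) *
          ((ENNReal.ofReal (C^2))^(k+n-1) * (ENNReal.ofReal (wf^2))^k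
            * (ENNReal.ofReal (wg^2))^n) := by
        apply mul_le_mul' le_rfl
        apply mul_le_mul' (mul_le_mul' (pow_le_pow_left' hD_le _) (pow_le_pow_left' hQP _))
        exact pow_le_pow_left' (le_of_eq hQG) _
    _ = ENNReal.ofReal (N ^ (2*(s-s₀)) * ((C^2)^(k+n-1) * (wf^2)^k * (wg^2)^n)) := by
        rw [← ENNReal.ofReal_pow (by positivity), ← ENNReal.ofReal_pow (by nlinarith),
          ← ENNReal.ofReal_pow (by nlinarith), ← ENNReal.ofReal_mul (by positivity),
          ← ENNReal.ofReal_mul (by positivity), ← ENNReal.ofReal_mul (by positivity)]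
    _ ≤ ENNReal.ofReal (R^2) := by
        apply ENNReal.ofReal_le_ofReal
        rw [hRdef]
        have hexp : (N ^ ((n:ℝ)*(s-s₀)))^2 = N ^ (((n:ℝ)*(s-s₀))*2) := by
          rw [← Real.rpow_natCast (N ^ ((n:ℝ)*(s-s₀))) 2, ← Real.rpow_mul (by linarith)]
          norm_num
        have hNle : N ^ (2*(s-s₀)) ≤ (N ^ ((n:ℝ)*(s-s₀)))^2 := by
          rw [hexp]
          apply Real.rpow_le_rpow_of_exponent_le hN
          have hn1 : (1:ℝ) ≤ (n:ℝ) := by exact_mod_cast hn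
          nlinarith
        have hCle : ((C^2):ℝ)^(k+n-1) ≤ (C^m)^2 := by
          rw [← pow_mul, ← pow_mul]
          apply pow_le_pow_right₀ hC1
          omega
        calc N ^ (2*(s-s₀)) * ((C^2)^(k+n-1) * (wf^2)^k * (wg^2)^n)
            ≤ (N ^ ((n:ℝ)*(s-s₀)))^2 * ((C^m)^2 * (wf^2)^k * (wg^2)^n) := by
              apply mul_le_mul hNle _ (by positivity) (by positivity)
              apply mul_le_mul_of_nonneg_right
                (mul_le_mul_of_nonneg_right hCle (by positivity)) (by positivity)
        _ = (C ^ m * N ^ ((n:ℝ)*(s-s₀)) * wf ^ k * wg ^ n)^2 := by ring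
  -- conclude
  calc Real.sqrt (∑' ℓ, if jap ℓ ≤ N then jap ℓ ^ (2*s) * (Freal ℓ)^2 else 0)
      = Real.sqrt ((∑' ℓ, eT ℓ).toReal) := by rw [hrealsum]
  _ ≤ Real.sqrt ((ENNReal.ofReal (R^2)).toReal) := by
      apply Real.sqrt_le_sqrt
      exact ENNReal.toReal_mono ENNReal.ofReal_ne_top hmain
  _ = Real.sqrt (R^2) := by rw [ENNReal.toReal_ofReal (by positivity)]
  _ = R := Real.sqrt_sq hR0
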